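/- Let g be a positive definite form of degree d on ℝⁿ with sublevel set G = {g ≤ 1}. Then ‖g‖²_{L²(μ_g)} = ((n+d)/(n+2d)) · ‖g‖_{L¹(μ_g)}, where μ_g is Lebesgue measure restricted to G. -/

import Mathlib

open MeasureTheory MvPolynomial

open Pointwise Set in
private theorem aux_eval_smul (n d : ℕ) (g : MvPolynomial (Fin n) ℝ) (hg : g.IsHomogeneous d)
    (c : ℝ) (x : Fin n → ℝ) : eval (c • x) g = c ^ d * eval x g := by
  simp only [eval_eq', Finset.mul_sum]
  refine Finset.sum_congr rfl fun m hm => ?_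
  have h1 := hg (MvPolynomial.mem_support_iff.mp hm)
  have h2 : ∑ i, m i = d := by
    rw [← h1, Finsupp.weight_apply, Finsupp.sum_fintype] <;> simp
  have h3 : ∏ i, (c • x) i ^ m i = c ^ d * ∏ i, x i ^ m i := by
    simp only [Pi.smul_apply, smul_eq_mul, mul_pow, Finset.prod_mul_distrib,
      Finset.prod_pow_eq_pow_sum, h2]
  rw [h3]; ring

open Pointwise Set in
private theorem aux_sublevel_vol (n d : ℕ) (hd : 1 ≤ d) (g : MvPolynomial (Fin n) ℝ)
    (hg : g.IsHomogeneous d) {t : ℝ} (ht : 0 < t) :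
    volume {x : Fin n → ℝ | eval x g ≤ t}
      = ENNReal.ofReal (t ^ ((n:ℝ)/(d:ℝ))) * volume {x : Fin n → ℝ | eval x g ≤ 1} := by
  have hdR : (d:ℝ) ≠ 0 := Nat.cast_ne_zero.mpr (Nat.one_le_iff_ne_zero.mp hd)
  set c := t ^ ((d:ℝ)⁻¹) with hc
  have hc0 : 0 < c := Real.rpow_pos_of_pos ht _
  have hcd : c ^ d = t := by
    rw [hc, ← Real.rpow_natCast (t ^ ((d:ℝ)⁻¹)) d, ← Real.rpow_mul ht.le,
      inv_mul_cancel₀ hdR, Real.rpow_one]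
  have hset : {x : Fin n → ℝ | eval x g ≤ t} = c • {x : Fin n → ℝ | eval x g ≤ 1} := by
    ext x
    simp only [Set.mem_smul_set_iff_inv_smul_mem₀ hc0.ne', Set.mem_setOf_eq,
      aux_eval_smul n d g hg, inv_pow, hcd, inv_mul_eq_div, div_le_one ht]
  rw [hset, Measure.addHaar_smul_of_nonneg _ hc0.le]
  congr 2
  rw [hc, Module.finrank_fintype_fun_eq_card, Fintype.card_fin,
    ← Real.rpow_natCast (t ^ ((d:ℝ)⁻¹)) n, ← Real.rpow_mul ht.le]
  congr 1
  field_simp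

private theorem aux_eval_zero (n d : ℕ) (hd : 1 ≤ d) (g : MvPolynomial (Fin n) ℝ)
    (hg : g.IsHomogeneous d) : eval (0 : Fin n → ℝ) g = 0 := by
  have := aux_eval_smul n d g hg 0 0
  rwa [smul_zero, zero_pow (Nat.one_le_iff_ne_zero.mp hd), zero_mul] at this

private theorem aux_cpt (n d : ℕ) (hn : 1 ≤ n) (hd : 1 ≤ d) (g : MvPolynomial (Fin n) ℝ)
    (hg : g.IsHomogeneous d) (hgpos : ∀ x : Fin n → ℝ, x ≠ 0 → 0 < eval x g) :
    IsCompact {x : Fin n → ℝ | eval x g ≤ 1} := by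
  haveI : Nonempty (Fin n) := ⟨⟨0, hn⟩⟩
  have hfc : Continuous fun x : Fin n → ℝ => eval x g := MvPolynomial.continuous_eval g
  have hclosed : IsClosed {x : Fin n → ℝ | eval x g ≤ 1} := isClosed_le hfc continuous_const
  have hS : (Metric.sphere (0 : Fin n → ℝ) 1).Nonempty :=
    NormedSpace.sphere_nonempty.mpr zero_le_one
  obtain ⟨z, hz, hmin⟩ := (isCompact_sphere (0 : Fin n → ℝ) 1).exists_isMinOn hS hfc.continuousOn
  have hz1 : ‖z‖ = 1 := mem_sphere_zero_iff_norm.mp hz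
  have hm : 0 < eval z g := hgpos z (by intro h; rw [h] at hz1; simp at hz1)
  set m := eval z g with hmdef
  have hbdd : ∀ x ∈ {x : Fin n → ℝ | eval x g ≤ 1}, ‖x‖ ≤ max 1 m⁻¹ := by
    intro x hx
    rcases le_or_gt ‖x‖ 1 with h1 | h1
    · exact le_trans h1 (le_max_left _ _)
    · have hx0 : x ≠ 0 := by
        intro h; rw [h] at h1; simp at h1; exact absurd h1 (by norm_num)
      set u := ‖x‖⁻¹ • x with hu
      have hnx : ‖x‖ ≠ 0 := by positivity
      have hu1 : u ∈ Metric.sphere (0 : Fin n → ℝ) 1 := by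
        simp [hu, norm_smul, abs_of_nonneg (norm_nonneg x), inv_mul_cancel₀ hnx]
      have hxu : ‖x‖ • u = x := smul_inv_smul₀ hnx x
      have key : ‖x‖ ^ d * m ≤ 1 := by
        calc ‖x‖ ^ d * m ≤ ‖x‖ ^ d * eval u g := by
              have := hmin hu1
              exact mul_le_mul_of_nonneg_left this (by positivity)
          _ = eval x g := by rw [← aux_eval_smul n d g hg, hxu]
          _ ≤ 1 := hx
      have h2 : ‖x‖ ^ d ≤ m⁻¹ := by
        rw [← one_div]; exact (le_div_iff₀ hm).mpr key
      exact le_trans (le_trans (le_self_pow₀ h1.le (Nat.one_le_iff_ne_zero.mp hd)) h2)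
        (le_max_right _ _)
  exact Metric.isCompact_of_isClosed_isBounded hclosed
    (Metric.isBounded_closedBall.subset fun x hx =>
      mem_closedBall_zero_iff.mpr (hbdd x hx))

private theorem aux_rpow_integral {β : ℝ} (hβ : 0 < β) :
    ∫ t in Set.Ioc (0:ℝ) 1, t ^ β = 1 / (β + 1) := by
  rw [← intervalIntegral.integral_of_le zero_le_one,
    integral_rpow (Or.inl (by linarith))]
  rw [Real.one_rpow, Real.zero_rpow (by linarith)]
  norm_num

private theorem aux_rpow_intble {β : ℝ} (hβ : 0 < β) :
    IntegrableOn (fun t : ℝ => t ^ β) (Set.Ioc (0:ℝ) 1) volume :=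
  (intervalIntegrable_iff_integrableOn_Ioc_of_le zero_le_one).mp
    (intervalIntegral.intervalIntegrable_rpow' (by linarith))

theorem stmt11 (n d : ℕ) (hn : 1 ≤ n) (hd : 1 ≤ d)
    (g : MvPolynomial (Fin n) ℝ) (hg : g.IsHomogeneous d)
    (hgpos : ∀ x : Fin n → ℝ, x ≠ 0 → 0 < eval x g) :
    ∫ x in {x : Fin n → ℝ | eval x g ≤ 1}, (eval x g) ^ 2
      = (((n : ℝ) + d) / ((n : ℝ) + 2 * d)) *
          ∫ x in {x : Fin n → ℝ | eval x g ≤ 1}, eval x g := by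
  have hdR : (0:ℝ) < d := by exact_mod_cast Nat.lt_of_lt_of_le Nat.zero_lt_one hd
  have hnR : (0:ℝ) < n := by exact_mod_cast Nat.lt_of_lt_of_le Nat.zero_lt_one hn
  set f : (Fin n → ℝ) → ℝ := fun x => eval x g with hf
  set G : Set (Fin n → ℝ) := {x | eval x g ≤ 1} with hG
  set α : ℝ := (n:ℝ)/(d:ℝ) with hα
  have hα0 : 0 < α := div_pos hnR hdR
  have hGc : IsCompact G := aux_cpt n d hn hd g hg hgpos
  have hGm : MeasurableSet G := hGc.isClosed.measurableSet
  set V : ENNReal := volume G with hV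
  have hVtop : V ≠ ⊤ := hGc.measure_lt_top.ne
  have hfc : Continuous f := MvPolynomial.continuous_eval g
  have hfm : Measurable f := hfc.measurable
  have hfnn : ∀ x, 0 ≤ f x := by
    intro x
    rcases eq_or_ne x 0 with rfl | hx
    · show (0:ℝ) ≤ eval (0 : Fin n → ℝ) g
      rw [aux_eval_zero n d hd g hg]
    · exact (hgpos x hx).le
  set μ : Measure (Fin n → ℝ) := volume.restrict G with hμ
  -- tail measure formula
  have key : ∀ t ∈ Set.Ioc (0:ℝ) 1,
      μ {a | t < f a} = ENNReal.ofReal (1 - t ^ α) * V := by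
    intro t ht
    have hA : volume {x : Fin n → ℝ | eval x g ≤ t} = ENNReal.ofReal (t ^ α) * V :=
      aux_sublevel_vol n d hd g hg ht.1
    have hsub : {x : Fin n → ℝ | eval x g ≤ t} ⊆ G := fun x hx => le_trans hx ht.2
    have hAm : MeasurableSet {x : Fin n → ℝ | eval x g ≤ t} :=
      measurableSet_le hfm measurable_const
    have hrw : {a | t < f a} ∩ G = G \ {x : Fin n → ℝ | eval x g ≤ t} := by
      ext x
      simp only [Set.mem_inter_iff, Set.mem_setOf_eq, Set.mem_diff, not_le, hG, hf]
      tauto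
    rw [hμ, Measure.restrict_apply (measurableSet_lt measurable_const hfm), hrw,
      measure_diff hsub hAm.nullMeasurableSet
        (ne_top_of_le_ne_top hVtop (measure_mono hsub)), hA]
    have ht1 : t ^ α ≤ 1 := Real.rpow_le_one ht.1.le ht.2 hα0.le
    rw [ENNReal.ofReal_sub _ (Real.rpow_nonneg ht.1.le α), ENNReal.ofReal_one,
      ENNReal.sub_mul (fun _ _ => hVtop), one_mul]
  have hzero : ∀ t ∈ Set.Ioi (1:ℝ), μ {a | t < f a} = 0 := by
    intro t ht
    rw [hμ, Measure.restrict_apply (measurableSet_lt measurable_const hfm)]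
    have hemp : {a | t < f a} ∩ G = ∅ := by
      ext x
      simp only [Set.mem_inter_iff, Set.mem_setOf_eq, Set.mem_empty_iff_false, iff_false, hG, hf]
      rintro ⟨h1, h2⟩
      exact absurd (lt_of_lt_of_le (lt_trans ht h1) h2) (lt_irrefl 1)
    rw [hemp, measure_empty]
  have hIoi : Set.Ioi (0:ℝ) = Set.Ioc 0 1 ∪ Set.Ioi 1 := (Set.Ioc_union_Ioi_eq_Ioi zero_le_one).symm
  -- first moment
  have EqA : ∫⁻ x, ENNReal.ofReal (f x) ∂μ = ENNReal.ofReal (α/(α+1)) * V := by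
    rw [lintegral_eq_lintegral_meas_lt μ (ae_of_all _ hfnn) hfm.aemeasurable, hIoi,
      lintegral_union measurableSet_Ioi (Set.Ioc_disjoint_Ioi le_rfl)]
    rw [setLIntegral_congr_fun measurableSet_Ioi hzero]
    simp only [lintegral_zero, add_zero]
    rw [setLIntegral_congr_fun measurableSet_Ioc key]
    have hmes : Measurable fun t : ℝ => ENNReal.ofReal (1 - t ^ α) := by fun_prop
    rw [lintegral_mul_const _ hmes]
    congr 1
    have hint : IntegrableOn (fun t : ℝ => 1 - t ^ α) (Set.Ioc (0:ℝ) 1) volume :=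
      ((integrableOn_const_iff).mpr (Or.inr measure_Ioc_lt_top)).sub (aux_rpow_intble hα0)
    rw [← ofReal_integral_eq_lintegral_ofReal hint]
    · congr 1
      rw [integral_sub ((integrableOn_const_iff (C := (1:ℝ))).mpr (Or.inr measure_Ioc_lt_top)) (aux_rpow_intble hα0),
        aux_rpow_integral hα0]
      simp [Real.volume_Ioc]
      field_simp
      ring
    · refine (ae_restrict_iff' measurableSet_Ioc).mpr (ae_of_all _ fun t ht => ?_)
      have := Real.rpow_le_one ht.1.le ht.2 hα0.le
      simp only [Pi.zero_apply]
      linarith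
  -- second moment
  have EqB : ∫⁻ x, ENNReal.ofReal (f x ^ 2) ∂μ = ENNReal.ofReal (α/(α+2)) * V := by
    have hgint : ∀ t > (0:ℝ), IntervalIntegrable (fun s : ℝ => 2 * s) volume 0 t :=
      fun t _ => (intervalIntegral.intervalIntegrable_id).const_mul 2
    have hcomp := lintegral_comp_eq_lintegral_meas_lt_mul μ (ae_of_all _ hfnn)
      hfm.aemeasurable hgint
      ((ae_restrict_iff' measurableSet_Ioi).mpr
        (ae_of_all _ fun t ht => by linarith [Set.mem_Ioi.mp ht]))
    have hsq : ∀ s : ℝ, (∫ t in (0:ℝ)..s, 2 * t) = s ^ 2 := by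
      intro s
      rw [intervalIntegral.integral_const_mul, integral_id]
      ring
    simp only [hsq] at hcomp
    rw [hcomp, hIoi, lintegral_union measurableSet_Ioi (Set.Ioc_disjoint_Ioi le_rfl)]
    have h0 : ∫⁻ t in Set.Ioi (1:ℝ), μ {a | t < f a} * ENNReal.ofReal (2 * t) = 0 := by
      rw [setLIntegral_congr_fun measurableSet_Ioi
        (fun t ht => show μ {a | t < f a} * ENNReal.ofReal (2 * t) = 0 by rw [hzero t ht, zero_mul])]
      exact lintegral_zero
    rw [h0, add_zero]
    have hptw : ∀ t ∈ Set.Ioc (0:ℝ) 1,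
        μ {a | t < f a} * ENNReal.ofReal (2 * t)
          = ENNReal.ofReal ((1 - t ^ α) * (2 * t)) * V := by
      intro t ht
      have ht1 : t ^ α ≤ 1 := Real.rpow_le_one ht.1.le ht.2 hα0.le
      rw [key t ht, mul_right_comm, ← ENNReal.ofReal_mul (by linarith)]
    rw [setLIntegral_congr_fun measurableSet_Ioc hptw]
    have hmes2 : Measurable fun t : ℝ => ENNReal.ofReal ((1 - t ^ α) * (2 * t)) := by fun_prop
    rw [lintegral_mul_const _ hmes2]
    congr 1
    have hEq : Set.EqOn (fun t : ℝ => (1 - t ^ α) * (2 * t))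
        (fun t : ℝ => 2 * t - 2 * t ^ (α + 1)) (Set.Ioc (0:ℝ) 1) := by
      intro t ht
      have htne : t ≠ 0 := ne_of_gt ht.1
      simp only
      rw [Real.rpow_add_one htne]
      ring
    have i1 : IntegrableOn (fun t : ℝ => 2 * t) (Set.Ioc (0:ℝ) 1) volume :=
      (continuous_const.mul continuous_id).integrableOn_Ioc
    have i2 : IntegrableOn (fun t : ℝ => 2 * t ^ (α + 1)) (Set.Ioc (0:ℝ) 1) volume :=
      (aux_rpow_intble (by linarith)).const_mul 2
    have hint2 : IntegrableOn (fun t : ℝ => (1 - t ^ α) * (2 * t)) (Set.Ioc (0:ℝ) 1) volume :=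
      MeasureTheory.IntegrableOn.congr_fun (i1.sub i2)
        (fun t ht => (hEq ht).symm) measurableSet_Ioc
    rw [← ofReal_integral_eq_lintegral_ofReal hint2]
    · congr 1
      rw [setIntegral_congr_fun measurableSet_Ioc hEq, integral_sub i1 i2]
      have e1 : ∫ t in Set.Ioc (0:ℝ) 1, 2 * t = 1 := by
        rw [← intervalIntegral.integral_of_le zero_le_one,
          intervalIntegral.integral_const_mul, integral_id]
        norm_num
      have e2 : ∫ t in Set.Ioc (0:ℝ) 1, 2 * t ^ (α + 1) = 2 / (α + 2) := by
        rw [MeasureTheory.integral_const_mul, aux_rpow_integral (by linarith : (0:ℝ) < α + 1),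
          show α + 1 + 1 = α + 2 by ring]
        ring
      have hα2 : α + 2 ≠ 0 := ne_of_gt (by linarith)
      rw [e1, e2]
      field_simp
      ring
    · refine (ae_restrict_iff' measurableSet_Ioc).mpr (ae_of_all _ fun t ht => ?_)
      have ht1 : t ^ α ≤ 1 := Real.rpow_le_one ht.1.le ht.2 hα0.le
      simp only [Pi.zero_apply]
      have : 0 ≤ 1 - t ^ α := by linarith
      have h2t : 0 ≤ 2 * t := by linarith [ht.1]
      positivity
  -- assemble
  have hae2 : AEStronglyMeasurable (fun x => f x ^ 2) μ := (hfm.pow_const 2).aestronglyMeasurable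
  have hae1 : AEStronglyMeasurable f μ := hfm.aestronglyMeasurable
  rw [integral_eq_lintegral_of_nonneg_ae (ae_of_all _ fun x => sq_nonneg (f x)) hae2,
    integral_eq_lintegral_of_nonneg_ae (ae_of_all _ hfnn) hae1, EqA, EqB,
    ENNReal.toReal_mul, ENNReal.toReal_mul,
    ENNReal.toReal_ofReal (by positivity), ENNReal.toReal_ofReal (by positivity)]
  have hne1 : (n:ℝ) + d ≠ 0 := by positivity
  have hne2 : (n:ℝ) + 2 * d ≠ 0 := by positivity
  have hkey : α / (α + 2) = (((n:ℝ) + d) / ((n:ℝ) + 2 * d)) * (α / (α + 1)) := by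
    rw [hα]
    field_simp
  rw [hkey]
  ring
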